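/- Let p be an odd prime and m ≥ 1 with p^m > 3, and let n ≥ 3. Let ν : GL_n(ℤ/p^{3m}ℤ) → GL_n(ℤ/p^mℤ) be the group homomorphism induced by entrywise reduction modulo p^m. Then ν is surjective and ν does not weakly split (it has no weak splitting). -/

import Mathlib

open Matrix Finset

/-! ### Auxiliary lemmas -/

lemma aux_one_add_pow_of_sq_zero {S : Type*} [Ring S] {A : S} (h : A * A = 0) (k : ℕ) :
    (1 + A) ^ k = 1 + (k : S) * A := by
  induction k with
  | zero => simp
  | succ k ih =>
    have e : (1 + (k : S) * A) * (1 + A) = 1 + ((k : S) + 1) * A + (k : S) * (A * A) := by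
      noncomm_ring
    rw [pow_succ, ih, e, h, mul_zero, add_zero, Nat.cast_succ]

lemma aux_choose_eq {N : ℕ} (hN : 1 ≤ N) (k : ℕ) :
    N * (N - 1).choose k = N.choose (k + 1) * (k + 1) := by
  have h := Nat.add_one_mul_choose_eq (N - 1) k
  rw [show N - 1 + 1 = N by omega] at h
  exact h

lemma aux_dvd_choose_two {N : ℕ} (hN : Odd N) (h1 : 1 ≤ N) : N ∣ N.choose 2 := by
  have h := aux_choose_eq h1 1
  rw [Nat.choose_one_right] at h
  norm_num at h
  obtain ⟨s, hs⟩ : 2 ∣ N - 1 := by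
    obtain ⟨t, ht⟩ := hN; omega
  have h2 : N.choose 2 * 2 = N * s * 2 := by
    rw [← h, show N - 1 = 2 * s by omega]; ring
  exact ⟨s, by omega⟩

lemma aux_dvd_choose_three {p m : ℕ} (hp : p.Prime) (hodd : Odd p) (hpm : 3 < p ^ m) :
    p ∣ (p ^ m).choose 3 := by
  have hp1 : 1 < p := hp.one_lt
  have hm : 1 ≤ m := by
    rcases Nat.eq_zero_or_pos m with h | h
    · rw [h, pow_zero] at hpm; omega
    · exact h
  have hN1 : 1 ≤ p ^ m := Nat.one_le_pow _ _ (by omega)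
  have h := aux_choose_eq hN1 2
  norm_num at h
  by_cases h3 : p = 3
  · have hm2 : 2 ≤ m := by
      by_contra h'
      have hm1 : m = 1 := by omega
      rw [hm1, pow_one, h3] at hpm; omega
    obtain ⟨t, ht⟩ : p * p ∣ p ^ m := by
      calc p * p = p ^ 2 := (sq p).symm
      _ ∣ p ^ m := pow_dvd_pow p hm2
    obtain ⟨u, hu⟩ : p * p ∣ (p ^ m).choose 3 * 3 :=
      ⟨t * (p ^ m - 1).choose 2, by rw [← h, ht]; ring⟩
    subst h3
    omega
  · have hpN : p ∣ p ^ m * (p ^ m - 1).choose 2 :=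
      Dvd.dvd.mul_right (dvd_pow_self p (by omega)) _
    rw [h] at hpN
    exact (Nat.Coprime.dvd_of_dvd_mul_right ((Nat.coprime_primes hp (by norm_num)).2 h3) hpN)

/-- Core computation: the `N`-th power of `1 + E + ε•X` when `ε³ = 0`, `(N : R) = ε`,
`N ∣ C(N,2)`, `E² = 0` and `E·X·E = x'•E`. -/
lemma aux_key_pow {R S : Type*} [CommRing R] [Ring S] [Algebra R S]
    (ε : R) (hε : ε ^ 3 = 0) (N : ℕ) (hN4 : 4 ≤ N) (hNε : (N : R) = ε)
    (t2 : ℕ) (ht2 : N.choose 2 = N * t2)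
    (E X : S) (hE : E * E = 0) (x' : R) (hEXE : E * (X * E) = x' • E) :
    ∃ W : S, (1 + (E + ε • X)) ^ N =
      1 + (ε * (1 + (N.choose 3 : R) * x')) • E + (ε ^ 2) • W := by
  set u := E + ε • X with hu
  have h2 : u ^ 2 = ε • (E * X + X * E) + ε ^ 2 • (X * X) := by
    rw [pow_two, hu]
    simp only [mul_add, add_mul, mul_smul_comm, smul_mul_assoc, smul_smul, smul_add,
      mul_assoc, hE, mul_zero, zero_mul, smul_zero, add_zero, zero_add]
    module
  have h3 : u ^ 3 = (ε * x') • E + ε ^ 2 • (E * (X * X) + X * (E * X) + X * (X * E)) := by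
    rw [pow_succ, h2, hu]
    simp only [mul_add, add_mul, mul_smul_comm, smul_mul_assoc, smul_smul, smul_add,
      mul_assoc, hE, hEXE, mul_zero, zero_mul, smul_zero, add_zero, zero_add]
    match_scalars <;> (first | ring1 | (linear_combination hε))
  set Z4 : S := x' • (E * X) + (E * (X * X) + X * (E * X) + X * (X * E)) * E with hZ4
  have h4 : u ^ 4 = ε ^ 2 • Z4 := by
    rw [show (4:ℕ) = 3 + 1 by norm_num, pow_succ, h3, hu, hZ4]
    simp only [mul_add, add_mul, mul_smul_comm, smul_mul_assoc, smul_smul, smul_add,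
      mul_assoc, hE, hEXE, mul_zero, zero_mul, smul_zero, add_zero, zero_add]
    match_scalars <;> (first | ring1 | (linear_combination hε) | (linear_combination x' * hε))
  have htail : ∀ k ∈ Ico 4 (N + 1), u ^ k * (N.choose k : S) =
      ε ^ 2 • (Z4 * (u ^ (k - 4) * (N.choose k : S))) := by
    intro k hk
    rw [Finset.mem_Ico] at hk
    rw [show k = 4 + (k - 4) by omega, pow_add, h4, smul_mul_assoc, smul_mul_assoc, mul_assoc]
    rw [Nat.add_sub_cancel_left]
  have hbin : (1 + u) ^ N = ∑ k ∈ range (N + 1), u ^ k * (N.choose k : S) := by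
    rw [add_comm (1 : S) u, (Commute.one_right u).add_pow]
    refine Finset.sum_congr rfl fun k _ => by rw [one_pow, mul_one]
  rw [hbin, ← Finset.sum_range_add_sum_Ico _ (show 4 ≤ N + 1 by omega)]
  rw [Finset.sum_congr rfl htail, ← Finset.smul_sum]
  set T : S := ∑ k ∈ Ico 4 (N + 1), Z4 * (u ^ (k - 4) * (N.choose k : S)) with hT
  rw [show (4:ℕ) = 3+1 by norm_num, Finset.sum_range_succ, Finset.sum_range_succ,
    Finset.sum_range_succ, Finset.sum_range_one]
  have hmulc : ∀ (v : S) (c : ℕ), v * (c : S) = ((c : ℕ) : R) • v := by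
    intro v c
    calc v * (c : S) = (c : S) * v := ((Nat.cast_commute c v).symm).eq
    _ = c • v := (nsmul_eq_mul _ _).symm
    _ = ((c : ℕ) : R) • v := (Nat.cast_smul_eq_nsmul R c v).symm
  have hC2R : ((N.choose 2 : ℕ) : R) = ε * ((t2 : ℕ) : R) := by
    rw [ht2]; push_cast; rw [hNε]
  have hf0 : (u ^ 0) * ((N.choose 0 : ℕ) : S) = 1 := by norm_num
  have hf1 : u ^ 1 * ((N.choose 1 : ℕ) : S) = ε • E + ε ^ 2 • X := by
    rw [pow_one, hmulc, Nat.choose_one_right, hNε, hu]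
    module
  have hf2 : u ^ 2 * ((N.choose 2 : ℕ) : S) =
      ε ^ 2 • (((t2 : ℕ) : R) • (E * X + X * E)) := by
    rw [hmulc, h2, hC2R]
    match_scalars <;> (first | ring1 | (linear_combination ((t2 : ℕ) : R) * hε))
  have hf3 : u ^ 3 * ((N.choose 3 : ℕ) : S) =
      (ε * (((N.choose 3 : ℕ) : R) * x')) • E +
        ε ^ 2 • (((N.choose 3 : ℕ) : R) • (E * (X * X) + X * (E * X) + X * (X * E))) := by
    rw [hmulc, h3]
    match_scalars <;> ring1
  rw [hf0, hf1, hf2, hf3]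
  refine ⟨X + ((t2 : ℕ) : R) • (E * X + X * E) +
    ((N.choose 3 : ℕ) : R) • (E * (X * X) + X * (E * X) + X * (X * E)) + T, ?_⟩
  module

lemma aux_sbm_mul_mul {n : Type*} [Fintype n] [DecidableEq n] {R : Type*} [CommRing R]
    (i j : n) (X : Matrix n n R) :
    Matrix.single i j 1 * (X * Matrix.single i j 1) = (X j i) • Matrix.single i j 1 := by
  ext a b
  by_cases ha : a = i
  · by_cases hb : b = j
    · simp [ha, hb, Matrix.smul_apply, mul_comm]
    · have hb' : j ≠ b := fun h => hb h.symm
      simp [ha, hb, hb', Matrix.smul_apply]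
  · have ha' : i ≠ a := fun h => ha h.symm
    simp [ha, ha', Matrix.smul_apply]

lemma aux_prod_form {R S : Type*} [CommRing R] [Ring S] [Algebra R S]
    (ε c d : R) (hε : ε ^ 3 = 0) (E F W V : S) :
    (1 + (ε * c) • E + ε ^ 2 • W) * (1 + (ε * d) • F + ε ^ 2 • V)
      = 1 + (ε * c) • E + (ε * d) • F + ε ^ 2 • (W + V) + (ε ^ 2 * (c * d)) • (E * F) := by
  simp only [mul_add, add_mul, one_mul, mul_one, smul_mul_assoc, mul_smul_comm, smul_smul,
    smul_add]
  match_scalars <;>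
    (first | ring1 | (linear_combination (c * d) * hε) | (linear_combination c * hε) |
      (linear_combination d * hε) | (linear_combination ε * hε))

/-! ### ZMod lemmas -/

section ZModAux
variable {p m : ℕ}

lemma aux_zmod_cast_ker (hp : 0 < p) (x : ZMod (p ^ (3 * m)))
    (hx : ZMod.castHom (pow_dvd_pow p (show m ≤ 3 * m by omega)) (ZMod (p ^ m)) x = 0) :
    ∃ y, x = ((p ^ m : ℕ) : ZMod (p ^ (3 * m))) * y := by
  haveI : NeZero (p ^ (3 * m)) := ⟨pow_ne_zero _ (by omega)⟩
  rw [ZMod.castHom_apply] at hx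
  have hv : ((x.val : ℕ) : ZMod (p ^ m)) = 0 := by rw [ZMod.natCast_val]; exact hx
  obtain ⟨t, ht⟩ := (ZMod.natCast_eq_zero_iff _ _).mp hv
  refine ⟨(t : ZMod (p ^ (3 * m))), ?_⟩
  rw [← ZMod.natCast_zmod_val x, ht]
  push_cast
  ring

lemma aux_zmod_isUnit_of_cast (hp : p.Prime) (hm : 1 ≤ m) (x : ZMod (p ^ (3 * m)))
    (hx : IsUnit (ZMod.castHom (pow_dvd_pow p (show m ≤ 3 * m by omega)) (ZMod (p ^ m)) x)) :
    IsUnit x := by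
  haveI : NeZero (p ^ (3 * m)) := ⟨pow_ne_zero _ hp.pos.ne'⟩
  rw [ZMod.castHom_apply] at hx
  rw [← ZMod.natCast_val (R := ZMod (p ^ m)) x] at hx
  have hc : (x.val).Coprime (p ^ m) := (ZMod.isUnit_iff_coprime _ _).mp hx
  have hcp : (x.val).Coprime p := Nat.Coprime.coprime_dvd_right (dvd_pow_self p (by omega)) hc
  have h3 : (x.val).Coprime (p ^ (3 * m)) := Nat.Coprime.pow_right _ hcp
  have h4 := (ZMod.isUnit_iff_coprime (x.val) (p ^ (3 * m))).mpr h3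
  rwa [ZMod.natCast_zmod_val x] at h4

end ZModAux

/-- A weak splitting of a surjective group homomorphism `ν : G → H`. -/
def IsWeakSplitting {G H : Type*} [Group G] [Group H] (ν : G →* H) (s : H → G) : Prop :=
  (∀ h, ν (s h) = h) ∧
  ∃ G₀ : Subgroup G,
    (∀ a ∈ G₀, ∀ b ∈ G₀, a * b = b * a) ∧
    ∀ l : List (H × ℤ), (∀ p ∈ l, p.2 = 1 ∨ p.2 = -1) →
      (l.map fun p => p.1 ^ p.2).prod = 1 →
      (l.map fun p => s p.1 ^ p.2).prod ∈ G₀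

/-- Entrywise reduction modulo `p^m` from `GL_n(ℤ/p^{3m}ℤ)` to `GL_n(ℤ/p^mℤ)`,
i.e. between the unit groups of the corresponding matrix rings. -/
noncomputable def matrixReduction (p m n : ℕ) :
    (Matrix (Fin n) (Fin n) (ZMod (p ^ (3 * m))))ˣ →*
      (Matrix (Fin n) (Fin n) (ZMod (p ^ m)))ˣ :=
  Units.map
    ((ZMod.castHom (pow_dvd_pow p (show m ≤ 3 * m by omega)) (ZMod (p ^ m))).mapMatrix).toMonoidHom

lemma matrixReduction_surjective (p m n : ℕ) (hp : p.Prime) (hm : 1 ≤ m) :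
    Function.Surjective (matrixReduction p m n) := by
  intro B
  haveI : NeZero (p ^ m) := ⟨pow_ne_zero _ hp.pos.ne'⟩
  set f := ZMod.castHom (pow_dvd_pow p (show m ≤ 3 * m by omega)) (ZMod (p ^ m)) with hf
  set A : Matrix (Fin n) (Fin n) (ZMod (p ^ (3 * m))) :=
    fun i j => (((B : Matrix (Fin n) (Fin n) (ZMod (p ^ m))) i j).val : ZMod (p ^ (3 * m)))
    with hA
  have hmap : A.map f = (B : Matrix (Fin n) (Fin n) (ZMod (p ^ m))) := by
    ext i j
    rw [Matrix.map_apply, hA]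
    simp only
    rw [map_natCast f, ZMod.natCast_zmod_val]
  have hdet : IsUnit A.det := by
    apply aux_zmod_isUnit_of_cast hp hm
    rw [show f A.det = (A.map f).det from RingHom.map_det f A, hmap]
    exact (Matrix.isUnit_iff_isUnit_det _).mp B.isUnit
  obtain ⟨U, hU⟩ := (Matrix.isUnit_iff_isUnit_det A).mpr hdet
  refine ⟨U, ?_⟩
  have hval : ((matrixReduction p m n) U : Matrix (Fin n) (Fin n) (ZMod (p ^ m))) = A.map f := by
    show (RingHom.mapMatrix f :
        Matrix (Fin n) (Fin n) (ZMod (p ^ (3*m))) →+* Matrix (Fin n) (Fin n) (ZMod (p ^ m)))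
        (U : Matrix (Fin n) (Fin n) (ZMod (p ^ (3*m)))) = A.map f
    rw [hU, RingHom.mapMatrix_apply]
  ext i j
  rw [hval, hmap]

/-- If `g` reduces to `1 + e_{ij}` mod `p^m`, then `g^{p^m} = 1 + p^m·c·e_{ij} + p^{2m}·W`
with `c` a unit. -/
lemma aux_lift_pow_form (p m n : ℕ) (hp : p.Prime) (hodd : Odd p) (hm : 1 ≤ m)
    (hpm : 3 < p ^ m) (i j : Fin n) (hij : i ≠ j)
    (g : Matrix (Fin n) (Fin n) (ZMod (p ^ (3 * m))))
    (hg : g.map (ZMod.castHom (pow_dvd_pow p (show m ≤ 3 * m by omega)) (ZMod (p ^ m)))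
        = 1 + Matrix.single i j 1) :
    ∃ (c : ZMod (p ^ (3 * m))) (W : Matrix (Fin n) (Fin n) (ZMod (p ^ (3 * m)))),
      IsUnit c ∧
      g ^ (p ^ m) = 1 + (((p ^ m : ℕ) : ZMod (p ^ (3 * m))) * c) • Matrix.single i j 1
        + (((p ^ m : ℕ) : ZMod (p ^ (3 * m))) ^ 2) • W := by
  have hcast3 : ((p ^ (3 * m) : ℕ) : ZMod (p ^ (3 * m))) = 0 := ZMod.natCast_self _
  have hε3 : (((p ^ m : ℕ) : ZMod (p ^ (3 * m)))) ^ 3 = 0 := by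
    rw [← Nat.cast_pow, ← pow_mul, show m * 3 = 3 * m by ring, hcast3]
  -- the entrywise error term
  have hDcast : ∀ a b, ZMod.castHom (pow_dvd_pow p (show m ≤ 3 * m by omega)) (ZMod (p ^ m))
      ((g - (1 + Matrix.single i j 1) : Matrix (Fin n) (Fin n) (ZMod (p ^ (3 * m)))) a b)
      = 0 := by
    intro a b
    have h1E : ((1 + Matrix.single i j (1 : ZMod (p ^ (3 * m)))).map
        (ZMod.castHom (pow_dvd_pow p (show m ≤ 3 * m by omega)) (ZMod (p ^ m))))
        = 1 + Matrix.single i j 1 := by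
      ext a b
      rw [Matrix.map_apply, Matrix.add_apply, Matrix.add_apply, map_add]
      congr 1
      · rw [Matrix.one_apply, Matrix.one_apply,
          apply_ite (ZMod.castHom (pow_dvd_pow p (show m ≤ 3 * m by omega)) (ZMod (p ^ m))),
          _root_.map_one, _root_.map_zero]
      · simp only [Matrix.single, Matrix.of_apply]
        rw [apply_ite (ZMod.castHom (pow_dvd_pow p (show m ≤ 3 * m by omega)) (ZMod (p ^ m))),
          _root_.map_one, _root_.map_zero]
    have h2 := congrFun (congrFun (hg.trans h1E.symm) a) b
    rw [Matrix.map_apply, Matrix.map_apply] at h2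
    rw [Matrix.sub_apply, map_sub, h2, sub_self]
  have hDeps : ∀ a b, ∃ y,
      (g - (1 + Matrix.single i j 1) : Matrix (Fin n) (Fin n) (ZMod (p ^ (3 * m)))) a b
      = ((p ^ m : ℕ) : ZMod (p ^ (3 * m))) * y := fun a b =>
    aux_zmod_cast_ker hp.pos _ (hDcast a b)
  choose X hX using hDeps
  have hgform : g = 1 + (Matrix.single i j 1 +
      ((p ^ m : ℕ) : ZMod (p ^ (3 * m))) • (Matrix.of X)) := by
    ext a b
    have h3 := hX a b
    rw [Matrix.sub_apply] at h3
    simp only [Matrix.add_apply, Matrix.smul_apply, Matrix.of_apply, smul_eq_mul]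
    rw [Matrix.add_apply] at h3
    linear_combination h3
  -- hypotheses of the key lemma
  have hN4 : 4 ≤ p ^ m := by omega
  have hNodd : Odd (p ^ m) := hodd.pow
  obtain ⟨t2, ht2⟩ := aux_dvd_choose_two hNodd (by omega)
  have hEsq : Matrix.single i j (1 : ZMod (p ^ (3 * m))) * Matrix.single i j 1 = 0 :=
    Matrix.single_mul_single_of_ne (c := 1) i j i (fun h => hij h.symm) 1
  obtain ⟨W, hW⟩ := aux_key_pow ((p ^ m : ℕ) : ZMod (p ^ (3 * m))) hε3 (p ^ m) hN4
    (by push_cast; ring) t2 ht2 (Matrix.single i j 1) (Matrix.of X) hEsq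
    ((Matrix.of X) j i) (aux_sbm_mul_mul i j (Matrix.of X))
  refine ⟨1 + (((p ^ m).choose 3 : ℕ) : ZMod (p ^ (3 * m))) * ((Matrix.of X) j i), W, ?_, ?_⟩
  · -- unit
    obtain ⟨r, hr⟩ := aux_dvd_choose_three hp hodd hpm
    have h5 : ((((p ^ m).choose 3 : ℕ)) : ZMod (p ^ (3 * m))) * ((Matrix.of X) j i)
        = (p : ZMod (p ^ (3 * m))) * (((r : ℕ) : ZMod (p ^ (3 * m))) * (Matrix.of X) j i) := by
      rw [hr]; push_cast; ring
    rw [h5]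
    apply IsNilpotent.isUnit_one_add
    refine ⟨3 * m, ?_⟩
    rw [mul_pow, show ((p : ZMod (p ^ (3 * m)))) ^ (3 * m) = 0 by exact_mod_cast hcast3,
      zero_mul]
  · rw [hgform, hW]

/-- Let `p` be an odd prime, `m ≥ 1` with `p^m > 3`, and `n ≥ 3`.  Then the reduction
homomorphism `ν : GL_n(ℤ/p^{3m}ℤ) → GL_n(ℤ/p^mℤ)` is surjective and has no weak
splitting. -/
theorem matrixReduction_not_weaklySplit
    (p m n : ℕ) (hp : p.Prime) (hodd : Odd p) (hm : 1 ≤ m) (hpm : 3 < p ^ m)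
    (hn : 3 ≤ n) :
    Function.Surjective (matrixReduction p m n) ∧
      ¬ ∃ s : (Matrix (Fin n) (Fin n) (ZMod (p ^ m)))ˣ →
          (Matrix (Fin n) (Fin n) (ZMod (p ^ (3 * m))))ˣ,
        IsWeakSplitting (matrixReduction p m n) s := by
  refine ⟨matrixReduction_surjective p m n hp hm, ?_⟩
  rintro ⟨s, hs, G₀, hG₀comm, hrel⟩
  have h0n : 0 < n := by omega
  have h1n : 1 < n := by omega
  have hi01 : (⟨0, h0n⟩ : Fin n) ≠ ⟨1, h1n⟩ := by
    simp [Fin.ext_iff]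
  -- construction of the elementary units over `ZMod (p ^ m)`
  have mkunit : ∀ (i j : Fin n), i ≠ j →
      ∃ u : (Matrix (Fin n) (Fin n) (ZMod (p ^ m)))ˣ,
        (u : Matrix (Fin n) (Fin n) (ZMod (p ^ m))) = 1 + Matrix.single i j 1 ∧
        u ^ (p ^ m) = 1 := by
    intro i j hij
    have hEsq : Matrix.single i j (1 : ZMod (p ^ m)) * Matrix.single i j 1 = 0 :=
      Matrix.single_mul_single_of_ne (c := 1) i j i (fun h => hij h.symm) 1
    have hinv1 : (1 + Matrix.single i j (1 : ZMod (p ^ m)))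
        * (1 - Matrix.single i j 1) = 1 := by
      have e : (1 + Matrix.single i j (1 : ZMod (p ^ m))) * (1 - Matrix.single i j 1)
          = 1 - Matrix.single i j 1 * Matrix.single i j 1 := by noncomm_ring
      rw [e, hEsq, sub_zero]
    have hinv2 : (1 - Matrix.single i j (1 : ZMod (p ^ m)))
        * (1 + Matrix.single i j 1) = 1 := by
      have e : (1 - Matrix.single i j (1 : ZMod (p ^ m))) * (1 + Matrix.single i j 1)
          = 1 - Matrix.single i j 1 * Matrix.single i j 1 := by noncomm_ring
      rw [e, hEsq, sub_zero]
    refine ⟨⟨1 + Matrix.single i j 1, 1 - Matrix.single i j 1, hinv1, hinv2⟩, rfl, ?_⟩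
    apply Units.ext
    rw [Units.val_pow_eq_pow_val]
    show (1 + Matrix.single i j (1 : ZMod (p ^ m))) ^ (p ^ m) = 1
    rw [aux_one_add_pow_of_sq_zero hEsq]
    have hz : ((p ^ m : ℕ) : Matrix (Fin n) (Fin n) (ZMod (p ^ m))) = 0 := by
      rw [show ((p ^ m : ℕ) : Matrix (Fin n) (Fin n) (ZMod (p ^ m)))
          = algebraMap (ZMod (p ^ m)) (Matrix (Fin n) (Fin n) (ZMod (p ^ m)))
            ((p ^ m : ℕ) : ZMod (p ^ m)) from (map_natCast _ _).symm,
        ZMod.natCast_self, map_zero]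
    rw [hz, zero_mul, add_zero]
  obtain ⟨u12, hu12val, hu12ord⟩ := mkunit ⟨0, h0n⟩ ⟨1, h1n⟩ hi01
  obtain ⟨u21, hu21val, hu21ord⟩ := mkunit ⟨1, h1n⟩ ⟨0, h0n⟩ (Ne.symm hi01)
  -- membership of `p^m`-th powers of lifts in `G₀`
  have hmem : ∀ (u : (Matrix (Fin n) (Fin n) (ZMod (p ^ m)))ˣ), u ^ (p ^ m) = 1 →
      (s u) ^ (p ^ m) ∈ G₀ := by
    intro u hu
    have h := hrel (List.replicate (p ^ m) (u, (1 : ℤ)))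
      (by
        intro q hq
        left
        exact congrArg Prod.snd (List.eq_of_mem_replicate hq))
      (by simp [List.map_replicate, List.prod_replicate, hu])
    simpa [List.map_replicate, List.prod_replicate] using h
  -- the power form of the lifts
  have hform : ∀ (i j : Fin n) (hij : i ≠ j)
      (u : (Matrix (Fin n) (Fin n) (ZMod (p ^ m)))ˣ)
      (huval : (u : Matrix (Fin n) (Fin n) (ZMod (p ^ m))) = 1 + Matrix.single i j 1),
      ∃ (c : ZMod (p ^ (3 * m))) (W : Matrix (Fin n) (Fin n) (ZMod (p ^ (3 * m)))),
        IsUnit c ∧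
        ((s u : (Matrix (Fin n) (Fin n) (ZMod (p ^ (3 * m))))ˣ)
            : Matrix (Fin n) (Fin n) (ZMod (p ^ (3 * m)))) ^ (p ^ m)
          = 1 + (((p ^ m : ℕ) : ZMod (p ^ (3 * m))) * c) • Matrix.single i j 1
            + (((p ^ m : ℕ) : ZMod (p ^ (3 * m))) ^ 2) • W := by
    intro i j hij u huval
    apply aux_lift_pow_form p m n hp hodd hm hpm i j hij
    have hval := congrArg Units.val (hs u)
    simp only [matrixReduction, Units.coe_map, RingHom.toMonoidHom_eq_coe,
      MonoidHom.coe_coe, RingHom.mapMatrix_apply] at hval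
    rw [hval, huval]
  obtain ⟨c, W, hc, hcform⟩ := hform _ _ hi01 u12 hu12val
  obtain ⟨d, V, hd, hdform⟩ := hform _ _ (Ne.symm hi01) u21 hu21val
  -- commutativity in `G₀`
  have hab : (s u12) ^ (p ^ m) * (s u21) ^ (p ^ m)
      = (s u21) ^ (p ^ m) * (s u12) ^ (p ^ m) :=
    hG₀comm _ (hmem u12 hu12ord) _ (hmem u21 hu21ord)
  have habval := congrArg Units.val hab
  rw [Units.val_mul, Units.val_mul, Units.val_pow_eq_pow_val, Units.val_pow_eq_pow_val,
    hcform, hdform] at habval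
  have hcast3 : ((p ^ (3 * m) : ℕ) : ZMod (p ^ (3 * m))) = 0 := ZMod.natCast_self _
  have hε3 : (((p ^ m : ℕ) : ZMod (p ^ (3 * m)))) ^ 3 = 0 := by
    rw [← Nat.cast_pow, ← pow_mul, show m * 3 = 3 * m by ring, hcast3]
  rw [aux_prod_form _ c d hε3, aux_prod_form _ d c hε3,
    Matrix.single_mul_single_same, Matrix.single_mul_single_same] at habval
  have h00 := congrFun (congrFun habval ⟨0, h0n⟩) ⟨0, h0n⟩
  simp only [Matrix.add_apply, Matrix.smul_apply, smul_eq_mul, Matrix.one_apply_eq,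
    Matrix.single_apply_same,
    Matrix.single_apply_of_col_ne _ _ (Ne.symm hi01),
    Matrix.single_apply_of_row_ne (Ne.symm hi01)] at h00
  -- extract the contradiction
  have hzero : (((p ^ m : ℕ) : ZMod (p ^ (3 * m)))) ^ 2 * (c * d) = 0 := by
    linear_combination h00
  have hcd : IsUnit (c * d) := hc.mul hd
  have hsq : (((p ^ m : ℕ) : ZMod (p ^ (3 * m)))) ^ 2 = 0 :=
    (hcd.mul_right_eq_zero).mp (by linear_combination hzero)
  have h2m : ((p ^ (2 * m) : ℕ) : ZMod (p ^ (3 * m))) = 0 := by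
    rw [show ((p ^ (2 * m) : ℕ) : ZMod (p ^ (3 * m)))
        = (((p ^ m : ℕ) : ZMod (p ^ (3 * m)))) ^ 2 by push_cast; ring, hsq]
  have hdvd := (ZMod.natCast_eq_zero_iff _ _).mp h2m
  have hle := (Nat.pow_dvd_pow_iff_le_right hp.one_lt).mp hdvd
  omega
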